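/- For every positive integer n, t_{ℤ,2n}([0,1])^2 = t_{ℤ,n}([0,1/4]). -/

import Mathlib

open Polynomial Filter

/-- The supremum norm of an integer polynomial on the interval `[a, b]`. -/
noncomputable def supNorm (p : Polynomial ℤ) (a b : ℝ) : ℝ :=
  sSup ((fun x => |Polynomial.aeval x p|) '' Set.Icc a b)

/-- `tZ n a b` is the infimum over nonzero integer polynomials `p` of degree at most `n`
of `(sup_{x ∈ [a,b]} |p(x)|)^(1/n)`. -/
noncomputable def tZ (n : ℕ) (a b : ℝ) : ℝ :=
  sInf {r : ℝ | ∃ p : Polynomial ℤ, p ≠ 0 ∧ p.natDegree ≤ n ∧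
    r = supNorm p a b ^ ((1 : ℝ) / n)}



lemma supNorm_bddAbove (p : ℤ[X]) (a b : ℝ) :
    BddAbove ((fun x => |Polynomial.aeval x p|) '' Set.Icc a b) :=
  IsCompact.bddAbove_image isCompact_Icc ((Polynomial.continuous_aeval p).abs.continuousOn)

lemma le_supNorm (p : ℤ[X]) {a b x : ℝ} (hx : x ∈ Set.Icc a b) :
    |Polynomial.aeval x p| ≤ supNorm p a b :=
  le_csSup (supNorm_bddAbove p a b) ⟨x, hx, rfl⟩

lemma supNorm_nonneg (p : ℤ[X]) {a b : ℝ} (h : a ≤ b) : 0 ≤ supNorm p a b :=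
  (abs_nonneg _).trans (le_supNorm p (Set.left_mem_Icc.mpr h))

lemma supNorm_le (p : ℤ[X]) {a b M : ℝ} (h : a ≤ b)
    (H : ∀ x ∈ Set.Icc a b, |Polynomial.aeval x p| ≤ M) : supNorm p a b ≤ M :=
  csSup_le ((Set.nonempty_Icc.mpr h).image _) (by rintro y ⟨x, hx, rfl⟩; exact H x hx)


lemma natDegree_u : (X - X^2 : ℤ[X]).natDegree = 2 := by compute_degree!

lemma u_ne : (X - X^2 : ℤ[X]) ≠ 0 := fun h => by simpa [h] using natDegree_u

lemma lc_u : (X - X^2 : ℤ[X]).leadingCoeff = -1 := by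
  rw [Polynomial.leadingCoeff, natDegree_u]
  simp [coeff_X, coeff_X_pow]

lemma natDegree_s : ((1:ℤ[X]) - X).natDegree = 1 := by compute_degree!

lemma lc_s : ((1:ℤ[X]) - X).leadingCoeff = -1 := by
  rw [Polynomial.leadingCoeff, natDegree_s]; simp [coeff_one]

lemma u_comp_s : (X - X^2 : ℤ[X]).comp (1 - X) = X - X^2 := by
  simp [sub_comp, pow_comp]; ring

lemma symm_decomp : ∀ d : ℕ, ∀ f : ℤ[X], f.natDegree ≤ d → f.comp (1 - X) = f →
    ∃ r : ℤ[X], r.comp (X - X^2) = f ∧ 2 * r.natDegree ≤ f.natDegree := by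
  intro d
  induction d using Nat.strong_induction_on with
  | _ d ih =>
    intro f hdeg hsym
    by_cases hf : f = 0
    · exact ⟨0, by simp [hf], by simp [hf]⟩
    have hlcf : f.leadingCoeff ≠ 0 := fun h => hf (Polynomial.leadingCoeff_eq_zero.mp h)
    have hlc := congrArg Polynomial.leadingCoeff hsym
    rw [Polynomial.leadingCoeff_comp (by rw [natDegree_s]; norm_num), lc_s] at hlc
    have heven : Even f.natDegree := by
      rcases Nat.even_or_odd f.natDegree with h | h
      · exact h
      · exfalso
        rw [(Odd.neg_one_pow h)] at hlc
        exact hlcf (by linarith [hlc])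
    obtain ⟨m, hm⟩ := heven
    have hm2 : f.natDegree = 2 * m := by omega
    set c : ℤ := f.leadingCoeff * (-1)^m with hc
    have hc0 : c ≠ 0 := mul_ne_zero hlcf (pow_ne_zero _ (by norm_num))
    have hq0 : (C c * (X - X^2)^m : ℤ[X]) ≠ 0 :=
      mul_ne_zero (by simpa using hc0) (pow_ne_zero _ u_ne)
    have hdegq : (C c * (X - X^2)^m : ℤ[X]).natDegree = 2 * m := by
      rw [Polynomial.natDegree_C_mul hc0, Polynomial.natDegree_pow, natDegree_u]; ring
    have hlcq : (C c * (X - X^2)^m : ℤ[X]).leadingCoeff = f.leadingCoeff := by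
      rw [Polynomial.leadingCoeff_mul, Polynomial.leadingCoeff_pow, lc_u, Polynomial.leadingCoeff_C,
        hc, mul_assoc, ← pow_add, Even.neg_one_pow ⟨m, rfl⟩, mul_one]
    set g : ℤ[X] := f - C c * (X - X^2)^m with hg
    have hgsym : g.comp (1 - X) = g := by
      rw [hg, sub_comp, mul_comp, C_comp, pow_comp, u_comp_s, hsym]
    have hcomp_pow : (C c * X^m : ℤ[X]).comp (X - X^2) = C c * (X - X^2)^m := by
      simp [mul_comp, pow_comp]
    by_cases hg0 : g = 0
    · refine ⟨C c * X^m, ?_, ?_⟩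
      · rw [hcomp_pow]
        have h' : f - C c * (X - X^2)^m = 0 := by rw [← hg]; exact hg0
        exact (sub_eq_zero.mp h').symm
      · calc 2 * (C c * X^m : ℤ[X]).natDegree ≤ 2 * (0 + m) := by
              gcongr
              exact le_trans (Polynomial.natDegree_mul_le) (by simp)
            _ = f.natDegree := by omega
    · have hdlt : g.natDegree < f.natDegree := by
        apply Polynomial.natDegree_lt_natDegree hg0
        apply Polynomial.degree_sub_lt ?_ hf hlcq.symm
        rw [Polynomial.degree_eq_natDegree hf, Polynomial.degree_eq_natDegree hq0, hdegq, hm2]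
      obtain ⟨r', hr'c, hr'd⟩ := ih g.natDegree (lt_of_lt_of_le hdlt hdeg) g le_rfl hgsym
      refine ⟨r' + C c * X^m, ?_, ?_⟩
      · rw [add_comp, hr'c, hcomp_pow, hg]; ring
      · have h1 : (r' + C c * X^m).natDegree ≤ max r'.natDegree m := by
          refine le_trans (Polynomial.natDegree_add_le _ _) (max_le_max le_rfl ?_)
          exact le_trans (Polynomial.natDegree_mul_le) (by simp)
        have h2 : r'.natDegree < m := by omega
        have : (r' + C c * X^m).natDegree ≤ m := le_trans h1 (by omega)
        omega


/-- Bounding `supNorm q 0 (1/4)` via values of `q` at points `x - x²`, `x ∈ [0,1]`. -/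
lemma supNorm_quarter_le (q : ℤ[X]) {M : ℝ} (hM : 0 ≤ M)
    (H : ∀ x : ℝ, x ∈ Set.Icc (0:ℝ) 1 → |Polynomial.aeval (x - x^2 : ℝ) q| ≤ M) :
    supNorm q 0 (1/4) ≤ M := by
  apply supNorm_le q (by norm_num)
  intro u hu
  obtain ⟨hu0, hu1⟩ := hu
  set s : ℝ := Real.sqrt (1 - 4*u) with hs
  have hs0 : 0 ≤ s := Real.sqrt_nonneg _
  have hs1 : s ≤ 1 := Real.sqrt_le_one.mpr (by linarith)
  have hs2 : s^2 = 1 - 4*u := Real.sq_sqrt (by linarith)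
  set x : ℝ := (1 - s)/2 with hx
  have hx0 : (0:ℝ) ≤ x := by rw [hx]; linarith
  have hx1 : x ≤ 1 := by rw [hx]; linarith
  have hxu : x - x^2 = u := by rw [hx]; nlinarith [hs2]
  have := H x ⟨hx0, hx1⟩
  rwa [hxu] at this

/-- The key construction: from a nonzero `p` of degree `≤ 2n` produce a nonzero `q` of
degree `≤ n` with `supNorm q 0 (1/4) ≤ supNorm p 0 1`. -/
lemma exists_half_degree (n : ℕ) (p : ℤ[X]) (hp : p ≠ 0) (hdeg : p.natDegree ≤ 2*n) :
    ∃ q : ℤ[X], q ≠ 0 ∧ q.natDegree ≤ n ∧ supNorm q 0 (1/4) ≤ supNorm p 0 1 := by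
  set pt : ℤ[X] := p.comp (1 - X) with hpt
  have hsdeg : ((1:ℤ[X]) - X).natDegree = 1 := by compute_degree!
  have hptdeg : pt.natDegree ≤ 2*n := by
    rw [hpt, natDegree_comp, hsdeg, mul_one]; exact hdeg
  have hss : ((1:ℤ[X]) - X).comp (1 - X) = X := by
    rw [sub_comp, one_comp, X_comp]; ring
  have hptpt : pt.comp (1 - X) = p := by
    rw [hpt, comp_assoc, hss, comp_X]
  set f₁ : ℤ[X] := (1 - X) * p + X * pt with hf₁
  set f₂ : ℤ[X] := X * p + (1 - X) * pt with hf₂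
  have hf₁sym : f₁.comp (1 - X) = f₁ := by
    rw [hf₁, add_comp, mul_comp, mul_comp, hss, X_comp, hptpt, ← hpt]; ring
  have hf₂sym : f₂.comp (1 - X) = f₂ := by
    rw [hf₂, add_comp, mul_comp, mul_comp, hss, X_comp, hptpt, ← hpt]; ring
  have hf₁deg : f₁.natDegree ≤ 2*n + 1 := by
    apply le_trans (Polynomial.natDegree_add_le _ _)
    apply max_le
    · exact le_trans (Polynomial.natDegree_mul_le) (by rw [hsdeg]; omega)
    · exact le_trans (Polynomial.natDegree_mul_le) (by rw [natDegree_X]; omega)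
  have hf₂deg : f₂.natDegree ≤ 2*n + 1 := by
    apply le_trans (Polynomial.natDegree_add_le _ _)
    apply max_le
    · exact le_trans (Polynomial.natDegree_mul_le) (by rw [natDegree_X]; omega)
    · exact le_trans (Polynomial.natDegree_mul_le) (by rw [hsdeg]; omega)
  obtain ⟨q₁, hq₁c, hq₁d⟩ := symm_decomp f₁.natDegree f₁ le_rfl hf₁sym
  obtain ⟨q₂, hq₂c, hq₂d⟩ := symm_decomp f₂.natDegree f₂ le_rfl hf₂sym
  have hq₁n : q₁.natDegree ≤ n := by omega
  have hq₂n : q₂.natDegree ≤ n := by omega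
  -- not both zero
  have hnotboth : q₁ ≠ 0 ∨ q₂ ≠ 0 := by
    by_contra h
    push_neg at h
    obtain ⟨h1, h2⟩ := h
    have hf₁0 : f₁ = 0 := by rw [← hq₁c, h1, zero_comp]
    have hf₂0 : f₂ = 0 := by rw [← hq₂c, h2, zero_comp]
    have key : ((1:ℤ[X]) - 2*X) * p = (1 - X) * f₁ - X * f₂ := by
      rw [hf₁, hf₂]; ring
    rw [hf₁0, hf₂0] at key
    simp only [mul_zero, sub_zero] at key
    have h2X : ((1:ℤ[X]) - 2*X) ≠ 0 := fun h => by
      simpa [coeff_one] using congrArg (fun r => Polynomial.coeff r 1) h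
    rcases mul_eq_zero.mp key with h | h
    · exact h2X h
    · exact hp h
  -- pointwise bound for both candidates
  have hbound : ∀ x : ℝ, x ∈ Set.Icc (0:ℝ) 1 → ∀ f q : ℤ[X], q.comp (X - X^2) = f →
      (∀ y : ℝ, Polynomial.aeval y f =
        (if f = f₁ then (1-y) else y) * Polynomial.aeval y p
          + (if f = f₁ then y else (1-y)) * Polynomial.aeval (1-y) p) → True := fun _ _ _ _ _ _ => trivial
  have hN : (0:ℝ) ≤ supNorm p 0 1 := supNorm_nonneg p (by norm_num)
  have haux : ∀ (q f : ℤ[X]), q.comp (X - X^2) = f →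
      (∀ x : ℝ, x ∈ Set.Icc (0:ℝ) 1 → |Polynomial.aeval x f| ≤ supNorm p 0 1) →
      supNorm q 0 (1/4) ≤ supNorm p 0 1 := by
    intro q f hc hb
    apply supNorm_quarter_le q hN
    intro x hx
    have : Polynomial.aeval (x - x^2 : ℝ) q = Polynomial.aeval x f := by
      rw [← hc, aeval_comp]; simp
    rw [this]; exact hb x hx
  have hptval : ∀ x : ℝ, Polynomial.aeval x pt = Polynomial.aeval (1 - x : ℝ) p := by
    intro x; rw [hpt, aeval_comp]; simp
  have hb₁ : ∀ x : ℝ, x ∈ Set.Icc (0:ℝ) 1 → |Polynomial.aeval x f₁| ≤ supNorm p 0 1 := by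
    intro x hx
    obtain ⟨h0, h1⟩ := hx
    have hmem2 : (1 - x : ℝ) ∈ Set.Icc (0:ℝ) 1 := ⟨by linarith, by linarith⟩
    have e : Polynomial.aeval x f₁ =
        (1-x) * Polynomial.aeval x p + x * Polynomial.aeval (1-x : ℝ) p := by
      rw [hf₁]; simp [hptval x]
    rw [e]
    have b1 := le_supNorm p (a := 0) (b := 1) ⟨h0, h1⟩
    have b2 := le_supNorm p hmem2
    calc |(1-x) * Polynomial.aeval x p + x * Polynomial.aeval (1-x : ℝ) p|
        ≤ |(1-x) * Polynomial.aeval x p| + |x * Polynomial.aeval (1-x : ℝ) p| := abs_add_le _ _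
      _ = (1-x) * |Polynomial.aeval x p| + x * |Polynomial.aeval (1-x : ℝ) p| := by
          rw [abs_mul, abs_mul, abs_of_nonneg (by linarith : (0:ℝ) ≤ 1 - x),
            abs_of_nonneg h0]
      _ ≤ (1-x) * supNorm p 0 1 + x * supNorm p 0 1 := by
          apply add_le_add
          · exact mul_le_mul_of_nonneg_left b1 (by linarith)
          · exact mul_le_mul_of_nonneg_left b2 h0
      _ = supNorm p 0 1 := by ring
  have hb₂ : ∀ x : ℝ, x ∈ Set.Icc (0:ℝ) 1 → |Polynomial.aeval x f₂| ≤ supNorm p 0 1 := by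
    intro x hx
    obtain ⟨h0, h1⟩ := hx
    have hmem2 : (1 - x : ℝ) ∈ Set.Icc (0:ℝ) 1 := ⟨by linarith, by linarith⟩
    have e : Polynomial.aeval x f₂ =
        x * Polynomial.aeval x p + (1-x) * Polynomial.aeval (1-x : ℝ) p := by
      rw [hf₂]; simp [hptval x]
    rw [e]
    have b1 := le_supNorm p (a := 0) (b := 1) ⟨h0, h1⟩
    have b2 := le_supNorm p hmem2
    calc |x * Polynomial.aeval x p + (1-x) * Polynomial.aeval (1-x : ℝ) p|
        ≤ |x * Polynomial.aeval x p| + |(1-x) * Polynomial.aeval (1-x : ℝ) p| := abs_add_le _ _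
      _ = x * |Polynomial.aeval x p| + (1-x) * |Polynomial.aeval (1-x : ℝ) p| := by
          rw [abs_mul, abs_mul, abs_of_nonneg (by linarith : (0:ℝ) ≤ 1 - x),
            abs_of_nonneg h0]
      _ ≤ x * supNorm p 0 1 + (1-x) * supNorm p 0 1 := by
          apply add_le_add
          · exact mul_le_mul_of_nonneg_left b1 h0
          · exact mul_le_mul_of_nonneg_left b2 (by linarith)
      _ = supNorm p 0 1 := by ring
  rcases hnotboth with h | h
  · exact ⟨q₁, h, hq₁n, haux q₁ f₁ hq₁c hb₁⟩
  · exact ⟨q₂, h, hq₂n, haux q₂ f₂ hq₂c hb₂⟩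

theorem stmt_7 (n : ℕ) (hn : 0 < n) :
    tZ (2 * n) 0 1 ^ 2 = tZ n 0 (1 / 4) := by
  set A : Set ℝ := {r : ℝ | ∃ p : Polynomial ℤ, p ≠ 0 ∧ p.natDegree ≤ 2*n ∧
    r = supNorm p 0 1 ^ ((1 : ℝ) / (2*n : ℕ))} with hA
  set B : Set ℝ := {r : ℝ | ∃ p : Polynomial ℤ, p ≠ 0 ∧ p.natDegree ≤ n ∧
    r = supNorm p 0 (1/4) ^ ((1 : ℝ) / n)} with hB
  have htZA : tZ (2*n) 0 1 = sInf A := rfl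
  have htZB : tZ n 0 (1/4) = sInf B := rfl
  have hA0 : ∀ r ∈ A, (0:ℝ) ≤ r := by
    rintro r ⟨p, -, -, rfl⟩
    exact Real.rpow_nonneg (supNorm_nonneg p (by norm_num)) _
  have hB0 : ∀ r ∈ B, (0:ℝ) ≤ r := by
    rintro r ⟨p, -, -, rfl⟩
    exact Real.rpow_nonneg (supNorm_nonneg p (by norm_num)) _
  have hAne : A.Nonempty := ⟨_, ⟨1, one_ne_zero, by simp, rfl⟩⟩
  have hBne : B.Nonempty := ⟨_, ⟨1, one_ne_zero, by simp, rfl⟩⟩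
  have hAbdd : BddBelow A := ⟨0, hA0⟩
  have hBbdd : BddBelow B := ⟨0, hB0⟩
  have hexp : ((1:ℝ) / ((2*n : ℕ) : ℝ)) * 2 = (1:ℝ)/n := by
    push_cast
    field_simp
  -- squaring elements of A
  have hsq : ∀ p : ℤ[X], (supNorm p 0 1 ^ ((1 : ℝ) / (2*n : ℕ)))^2
      = supNorm p 0 1 ^ ((1:ℝ)/n) := by
    intro p
    have hnn : (0:ℝ) ≤ supNorm p 0 1 := supNorm_nonneg p (by norm_num)
    have hn' : (n:ℝ) ≠ 0 := Nat.cast_ne_zero.mpr hn.ne'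
    rw [← Real.rpow_natCast (supNorm p 0 1 ^ ((1 : ℝ) / (2*n : ℕ))) 2,
      ← Real.rpow_mul hnn]
    congr 1
  have hu_ne_C : ∀ c : ℤ, (X - X^2 : ℤ[X]) ≠ C c := by
    intro c h
    have := congrArg Polynomial.natDegree h
    rw [natDegree_u, natDegree_C] at this
    exact two_ne_zero this
  -- direction 1 : sInf A ^ 2 ≤ sInf B
  have hd1 : sInf A ^ 2 ≤ sInf B := by
    apply le_csInf hBne
    rintro s ⟨q, hq0, hqd, rfl⟩
    set p : ℤ[X] := q.comp (X - X^2) with hp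
    have hp0 : p ≠ 0 := by
      rw [hp]
      intro h
      rcases (Polynomial.comp_eq_zero_iff).mp h with h' | ⟨-, h'⟩
      · exact hq0 h'
      · exact hu_ne_C _ h'
    have hpd : p.natDegree ≤ 2*n := by
      rw [hp, natDegree_comp, natDegree_u]; omega
    have hmem : supNorm p 0 1 ^ ((1 : ℝ) / (2*n : ℕ)) ∈ A := ⟨p, hp0, hpd, rfl⟩
    have h1 : sInf A ≤ supNorm p 0 1 ^ ((1 : ℝ) / (2*n : ℕ)) := csInf_le hAbdd hmem
    have h2 : sInf A ^ 2 ≤ (supNorm p 0 1 ^ ((1 : ℝ) / (2*n : ℕ)))^2 :=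
      pow_le_pow_left₀ (Real.sInf_nonneg hA0) h1 2
    rw [hsq p] at h2
    refine h2.trans ?_
    apply Real.rpow_le_rpow (supNorm_nonneg p (by norm_num)) ?_ (by positivity)
    -- supNorm p 0 1 ≤ supNorm q 0 (1/4)
    apply supNorm_le p (by norm_num)
    intro x hx
    obtain ⟨h0, h1'⟩ := hx
    have hval : Polynomial.aeval x p = Polynomial.aeval (x - x^2 : ℝ) q := by
      rw [hp, aeval_comp]; simp
    rw [hval]
    apply _root_.le_supNorm q
    constructor
    · nlinarith
    · nlinarith [sq_nonneg (2*x - 1)]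
  -- direction 2 : sInf B ≤ sInf A ^ 2
  have hd2 : sInf B ≤ sInf A ^ 2 := by
    have h1 : ∀ r ∈ A, Real.sqrt (sInf B) ≤ r := by
      rintro r ⟨p, hp0, hpd, rfl⟩
      obtain ⟨q, hq0, hqd, hqle⟩ := exists_half_degree n p hp0 hpd
      have hmem : supNorm q 0 (1/4) ^ ((1 : ℝ) / n) ∈ B := ⟨q, hq0, hqd, rfl⟩
      have h2 : sInf B ≤ supNorm q 0 (1/4) ^ ((1 : ℝ) / n) := csInf_le hBbdd hmem
      have h3 : supNorm q 0 (1/4) ^ ((1 : ℝ) / n) ≤ supNorm p 0 1 ^ ((1:ℝ)/n) :=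
        Real.rpow_le_rpow (supNorm_nonneg q (by norm_num)) hqle (by positivity)
      have h4 : sInf B ≤ (supNorm p 0 1 ^ ((1 : ℝ) / (2*n : ℕ)))^2 := by
        rw [hsq p]; exact h2.trans h3
      calc Real.sqrt (sInf B) ≤ Real.sqrt ((supNorm p 0 1 ^ ((1 : ℝ) / (2*n : ℕ)))^2) :=
            Real.sqrt_le_sqrt h4
        _ = supNorm p 0 1 ^ ((1 : ℝ) / (2*n : ℕ)) :=
            Real.sqrt_sq (Real.rpow_nonneg (supNorm_nonneg p (by norm_num)) _)
    have h5 : Real.sqrt (sInf B) ≤ sInf A := le_csInf hAne h1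
    calc sInf B = Real.sqrt (sInf B) ^ 2 := (Real.sq_sqrt (Real.sInf_nonneg hB0)).symm
      _ ≤ sInf A ^ 2 := pow_le_pow_left₀ (Real.sqrt_nonneg _) h5 2
  rw [htZA, htZB]
  exact le_antisymm hd1 hd2
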